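/- For every β > 1, the function g(s) = tanh(β·s) − (1 − δ/10)·s is decreasing on the interval s > (7/6)·√δ, where β = 1 + δ and δ > 0 is sufficiently small. -/
import Mathlib

lemma tanh_eq' : Real.tanh = fun y : ℝ => Real.sinh y / Real.cosh y :=
  funext Real.tanh_eq_sinh_div_cosh

lemma hasDerivAt_tanh' (x : ℝ) : HasDerivAt Real.tanh (1 / Real.cosh x ^ 2) x := by
  have h := (Real.hasDerivAt_sinh x).div (Real.hasDerivAt_cosh x) (Real.cosh_pos x).ne'
  have heq : (Real.cosh x * Real.cosh x - Real.sinh x * Real.sinh x) / Real.cosh x ^ 2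
      = 1 / Real.cosh x ^ 2 := by
    rw [show Real.cosh x * Real.cosh x - Real.sinh x * Real.sinh x
        = Real.cosh x ^ 2 - Real.sinh x ^ 2 by ring, Real.cosh_sq_sub_sinh_sq]
  rw [heq] at h
  rw [tanh_eq']
  exact h

lemma continuous_tanh' : Continuous Real.tanh := by
  rw [tanh_eq']
  exact Real.continuous_sinh.div Real.continuous_cosh fun x => (Real.cosh_pos x).ne'

/-- For β = 1 + δ with δ > 0 sufficiently small, the function
    g(s) = tanh(β·s) − (1 − δ/10)·s is decreasing on the interval s > (7/6)·√δ. -/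
theorem stmt4 :
    ∃ δ₀ : ℝ, 0 < δ₀ ∧ ∀ δ : ℝ, 0 < δ → δ < δ₀ →
      AntitoneOn (fun s : ℝ => Real.tanh ((1 + δ) * s) - (1 - δ / 10) * s)
        (Set.Ioi ((7 / 6) * Real.sqrt δ)) := by
  refine ⟨1, one_pos, fun δ hδ hδ1 => ?_⟩
  have hd : ∀ s : ℝ, HasDerivAt (fun s : ℝ => Real.tanh ((1 + δ) * s) - (1 - δ / 10) * s)
      ((1 / Real.cosh ((1 + δ) * s) ^ 2) * (1 + δ) - (1 - δ / 10)) s := by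
    intro s
    have h1 : HasDerivAt (fun s : ℝ => (1 + δ) * s) (1 + δ) s := by
      simpa using (hasDerivAt_id s).const_mul (1 + δ)
    have h2 := (hasDerivAt_tanh' ((1 + δ) * s)).comp s h1
    have h3 : HasDerivAt (fun s : ℝ => (1 - δ / 10) * s) (1 - δ / 10) s := by
      simpa using (hasDerivAt_id s).const_mul (1 - δ / 10)
    exact h2.sub h3
  apply antitoneOn_of_deriv_nonpos (convex_Ioi _)
  · exact ((continuous_tanh'.comp (continuous_const.mul continuous_id)).sub
      (continuous_const.mul continuous_id)).continuousOn
  · intro s _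
    exact (hd s).differentiableAt.differentiableWithinAt
  · intro s hs
    rw [interior_Ioi, Set.mem_Ioi] at hs
    rw [(hd s).deriv]
    set x := (1 + δ) * s with hx
    have hsq : Real.sqrt δ ^ 2 = δ := Real.sq_sqrt hδ.le
    have hsqrt_pos : 0 < Real.sqrt δ := Real.sqrt_pos.mpr hδ
    have hs_pos : 0 < s := lt_trans (by positivity) hs
    have hx_gt : (7 / 6) * Real.sqrt δ < x := by
      have : s ≤ x := by nlinarith
      linarith
    have hx_pos : 0 < x := lt_trans (by positivity) hx_gt
    have hsinh : x < Real.sinh x := Real.self_lt_sinh_iff.mpr hx_pos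
    have hcosh : Real.cosh x ^ 2 = Real.sinh x ^ 2 + 1 := Real.cosh_sq x
    have hcosh_ge : x ^ 2 + 1 ≤ Real.cosh x ^ 2 := by nlinarith
    have hx2 : 49 / 36 * δ ≤ x ^ 2 := by nlinarith
    have hcosh_pos : 0 < Real.cosh x ^ 2 := by positivity
    have hkey : (1 + δ) ≤ Real.cosh x ^ 2 * (1 - δ / 10) := by nlinarith
    rw [sub_nonpos, div_mul_eq_mul_div, div_le_iff₀ hcosh_pos]
    linarith [mul_comm (Real.cosh x ^ 2) (1 - δ / 10)]
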